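/- Given a 3-CNF formula φ with m clauses over n variables and f(x) = number of clauses satisfied by x, consider the trace: access A[m]; then for each x ∈ {0,1}^n in order, access A[f(x)]; then access A[m]. Then φ is satisfiable if and only if the trace contains a backward reuse interval with value strictly less than 2^n + 1 ending at an access to A[m]; equivalently, the final access to A[m] has reuse interval 2^n + 1 iff φ is unsatisfiable. -/
import Mathlib

/-- A literal over `n` Boolean variables: variable index and polarity. -/
abbrev Lit (n : ℕ) := Fin n × Bool

/-- Clause `i` of the 3-CNF formula is satisfied by assignment `x`. -/
def clauseSat {n m : ℕ} (C : Fin m → Lit n × Lit n × Lit n)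
    (x : Fin n → Bool) (i : Fin m) : Prop :=
  x (C i).1.1 = (C i).1.2 ∨ x (C i).2.1.1 = (C i).2.1.2 ∨ x (C i).2.2.1 = (C i).2.2.2

instance {n m : ℕ} (C : Fin m → Lit n × Lit n × Lit n) (x : Fin n → Bool)
    (i : Fin m) : Decidable (clauseSat C x i) := by
  unfold clauseSat; infer_instance

/-- `f(x)`: the number of clauses of the formula satisfied by `x`. -/
def numSat {n m : ℕ} (C : Fin m → Lit n × Lit n × Lit n)
    (x : Fin n → Bool) : ℕ :=
  (Finset.univ.filter (fun i : Fin m => clauseSat C x i)).card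

/-- The `j`-th assignment in lexicographic order, via the bits of `j`. -/
def asg (n : ℕ) (j : ℕ) : Fin n → Bool := fun k => j.testBit k

/-- The trace: access `A[m]`; then, for each assignment `x` in order, access
`A[f(x)]`; finally access `A[m]` again.  (Time `0` and time `2^n + 1` are the
two boundary accesses to `A[m]`.) -/
def traceNP {n m : ℕ} (C : Fin m → Lit n × Lit n × Lit n) : ℕ → ℕ :=
  fun t => if t = 0 ∨ t = 2 ^ n + 1 then m else numSat C (asg n (t - 1))

theorem bits_exist (n : ℕ) :
    ∀ x : Fin n → Bool, ∃ j, j < 2 ^ n ∧ ∀ k : Fin n, Nat.testBit j k = x k := by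
  induction n with
  | zero => intro x; exact ⟨0, by norm_num, fun k => k.elim0⟩
  | succ n ih =>
    intro x
    obtain ⟨j', hj', hb⟩ := ih (fun k => x k.succ)
    refine ⟨Nat.bit (x 0) j', ?_, ?_⟩
    · have h1 : Nat.bit (x 0) j' ≤ 2 * j' + 1 := by
        cases x 0 <;> simp [Nat.bit]
      have h2 : 2 * j' + 1 < 2 ^ (n + 1) := by rw [pow_succ]; omega
      omega
    · intro k
      refine Fin.cases ?_ ?_ k
      · simp [Nat.testBit_bit_zero]
      · intro i
        simpa [Nat.testBit_bit_succ] using hb i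

theorem numSat_eq_iff {n m : ℕ} (C : Fin m → Lit n × Lit n × Lit n)
    (x : Fin n → Bool) : numSat C x = m ↔ ∀ i : Fin m, clauseSat C x i := by
  unfold numSat
  constructor
  · intro h
    have : (Finset.univ.filter (fun i : Fin m => clauseSat C x i)) = Finset.univ :=
      Finset.eq_univ_of_card _ (by simpa using h)
    intro i
    have := Finset.mem_filter.mp (this ▸ Finset.mem_univ i)
    exact this.2
  · intro h
    have : (Finset.univ.filter (fun i : Fin m => clauseSat C x i)) = Finset.univ := by
      apply Finset.filter_true_of_mem; intro i _; exact h i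
    simp [this]

theorem sat_iff_short_ri
    (n m : ℕ) (C : Fin m → Lit n × Lit n × Lit n) :
    ((∃ x : Fin n → Bool, ∀ i : Fin m, clauseSat C x i) ↔
      ∃ t t' : ℕ, t' < t ∧ t ≤ 2 ^ n + 1 ∧
        traceNP C t = m ∧ traceNP C t' = m ∧
        (∀ s, t' < s → s < t → traceNP C s ≠ m) ∧
        t - t' < 2 ^ n + 1) ∧
    ((∀ s, 0 < s → s < 2 ^ n + 1 → traceNP C s ≠ m) ↔
      ¬ ∃ x : Fin n → Bool, ∀ i : Fin m, clauseSat C x i) := by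
  -- internal access to m gives satisfiability and vice versa
  have key : (∃ s, 0 < s ∧ s < 2 ^ n + 1 ∧ traceNP C s = m) ↔
      (∃ x : Fin n → Bool, ∀ i : Fin m, clauseSat C x i) := by
    constructor
    · rintro ⟨s, hs0, hs1, hsm⟩
      have : traceNP C s = numSat C (asg n (s - 1)) := by
        unfold traceNP; rw [if_neg]; omega
      refine ⟨asg n (s - 1), (numSat_eq_iff C _).mp ?_⟩
      omega
    · rintro ⟨x, hx⟩
      obtain ⟨j, hj, hb⟩ := bits_exist n x
      refine ⟨j + 1, by omega, by omega, ?_⟩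
      have hx' : ∀ i : Fin m, clauseSat C (asg n j) i := by
        intro i
        have := hx i
        unfold clauseSat at this ⊢
        simpa only [asg, hb] using this
      have : numSat C (asg n j) = m := (numSat_eq_iff C _).mpr hx'
      unfold traceNP
      rw [if_neg (by omega)]
      simpa using this
  constructor
  · constructor
    · intro hsat
      have hex : ∃ s, 0 < s ∧ s < 2 ^ n + 1 ∧ traceNP C s = m := key.mpr hsat
      classical
      obtain ⟨s₀, hs₀⟩ := hex
      have hP : ∃ s, (0 < s ∧ s < 2 ^ n + 1 ∧ traceNP C s = m) := ⟨s₀, hs₀⟩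
      let t := Nat.find hP
      obtain ⟨ht0, ht1, htm⟩ := Nat.find_spec hP
      refine ⟨t, 0, ht0, by omega, htm, ?_, ?_, by omega⟩
      · unfold traceNP; simp
      · intro s hs0 hst hsm
        exact Nat.find_min hP hst ⟨hs0, by omega, hsm⟩
    · rintro ⟨t, t', htt', ht1, htm, ht'm, hno, hlt⟩
      by_cases ht : t < 2 ^ n + 1
      · by_cases ht'0 : t' = 0
        · -- t internal
          exact key.mp ⟨t, by omega, ht, htm⟩
        · exact key.mp ⟨t, by omega, ht, htm⟩
      · -- t = 2^n + 1, so t' > 0 since t - t' < 2^n+1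
        have ht' : 0 < t' := by omega
        have ht'lt : t' < 2 ^ n + 1 := by omega
        exact key.mp ⟨t', ht', ht'lt, ht'm⟩
  · constructor
    · intro h hsat
      obtain ⟨s, hs0, hs1, hsm⟩ := key.mpr hsat
      exact h s hs0 hs1 hsm
    · intro h s hs0 hs1 hsm
      exact h (key.mp ⟨s, hs0, hs1, hsm⟩)
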